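/- Let ε > 0 and let k̄ = l̄ be a nonnegative integer with k̄ ≥ max{ −ln ε + c , 2w − 2 }, where c := w(e+1) − rτ − 1 + ln(4K) + ln(2+w). Then the European put values on the full and on the truncated tree satisfy V − V^{TT} < ε. -/

import Mathlib

open Finset

open scoped Classical

noncomputable section

namespace HScut

/-- Level of a jump path `s : Fin n → ℤ` at time `t` (sum of the first `t` jumps). -/
def levelAt (n : ℕ) (s : Fin n → ℤ) (t : ℕ) : ℤ :=
  ∑ i ∈ Finset.univ.filter (fun i : Fin n => (i : ℕ) < t), s i

/-- Jump paths of length `n` with jumps of amplitude at most `m`. -/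
def paths (n m : ℕ) : Finset (Fin n → ℤ) :=
  Fintype.piFinset fun _ => Finset.Icc (-(m : ℤ)) (m : ℤ)

/-- Weight `π(s) = ∏ q (s i)` of a jump path. -/
def pathWeight (n : ℕ) (q : ℤ → ℝ) (s : Fin n → ℤ) : ℝ :=
  ∏ i, q (s i)

/-- Modified weight `π̃(s)`, where each `q (±i)` (`i ≠ 0`) is replaced by `max (q i) (q (-i))`
(which equals `w_i / n`). -/
def modWeight (n : ℕ) (q : ℤ → ℝ) (s : Fin n → ℤ) : ℝ :=
  ∏ i, (if s i = 0 then q 0 else max (q (s i)) (q (-s i)))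

/-- `q^{(n)}(k)`: probability of a net balance of `k` cumulative jumps at maturity. -/
def qfull (n m : ℕ) (q : ℤ → ℝ) (k : ℤ) : ℝ :=
  ∑ s ∈ (paths n m).filter (fun s => levelAt n s n = k), pathWeight n q s

/-- `q̃^{(n)}(k)`: enlarged probability of a net balance of `k` cumulative jumps at maturity. -/
def qtilde (n m : ℕ) (q : ℤ → ℝ) (k : ℤ) : ℝ :=
  ∑ s ∈ (paths n m).filter (fun s => levelAt n s n = k), modWeight n q s

/-- `q^{k̄,(n)}(k)`: probability of a net balance of `k` jumps at maturity while reaching at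
some time a net balance higher than `k̄`. -/
def qup (n m : ℕ) (q : ℤ → ℝ) (kbar : ℕ) (k : ℤ) : ℝ :=
  ∑ s ∈ (paths n m).filter
      (fun s => levelAt n s n = k ∧ ∃ t ≤ n, (kbar : ℤ) + 1 ≤ levelAt n s t),
    pathWeight n q s

/-- `q_{l̄}^{(n)}(k)`: probability of a net balance of `k` jumps at maturity while reaching at
some time a net balance lower than `-l̄`. -/
def qdown (n m : ℕ) (q : ℤ → ℝ) (lbar : ℕ) (k : ℤ) : ℝ :=
  ∑ s ∈ (paths n m).filter
      (fun s => levelAt n s n = k ∧ ∃ t ≤ n, levelAt n s t ≤ -(lbar : ℤ) - 1),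
    pathWeight n q s

/-- `q^{cut,(n)}(k)`: probability of reaching level `k` at maturity without ever leaving the
band `[-l̄, k̄]`. -/
def qcut (n m : ℕ) (q : ℤ → ℝ) (kbar lbar : ℕ) (k : ℤ) : ℝ :=
  ∑ s ∈ (paths n m).filter
      (fun s => levelAt n s n = k ∧
        ∀ t ≤ n, -(lbar : ℤ) ≤ levelAt n s t ∧ levelAt n s t ≤ (kbar : ℤ)),
    pathWeight n q s

/-- `P(j) = C(n,j) p^j (1-p)^(n-j)`. -/
def binomP (n : ℕ) (p : ℝ) (j : ℕ) : ℝ :=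
  (n.choose j : ℝ) * p ^ j * (1 - p) ^ (n - j)

/-- Put payoff at the terminal node `(n, j, k)`. -/
def putPayoff (n : ℕ) (S0 K σ dt h : ℝ) (j : ℕ) (k : ℤ) : ℝ :=
  max (K - S0 * Real.exp ((2 * (j : ℝ) - (n : ℝ)) * (σ * Real.sqrt dt) + h * (k : ℝ))) 0

/-- European put value `V` on the full tree. -/
def Vput (n m : ℕ) (q : ℤ → ℝ) (p S0 K σ τ h r : ℝ) : ℝ :=
  Real.exp (-(r * τ)) *
    ∑ k ∈ Finset.Icc (-((m : ℤ) * n)) ((m : ℤ) * n), ∑ j ∈ Finset.range (n + 1),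
      putPayoff n S0 K σ (τ / n) h j k * binomP n p j * qfull n m q k

/-- European put value `V^{TT}` on the truncated tree. -/
def VTT (n m : ℕ) (q : ℤ → ℝ) (p S0 K σ τ h r : ℝ) (kbar lbar : ℕ) : ℝ :=
  Real.exp (-(r * τ)) *
    ∑ k ∈ Finset.Icc (-(lbar : ℤ)) (kbar : ℤ), ∑ j ∈ Finset.range (n + 1),
      putPayoff n S0 K σ (τ / n) h j k * binomP n p j * qcut n m q kbar lbar k

/-- The sequence `W_i`: `W₁ = w₁`, `W_{i+1} = w_{i+1} + W_i^{(i+1)/i}` (real powers). -/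
def Wseq (w : ℕ → ℝ) : ℕ → ℝ
  | 0 => 0
  | 1 => w 1
  | (i + 2) => w (i + 2) + Wseq w (i + 1) ^ (((i : ℝ) + 2) / ((i : ℝ) + 1))

/-- `M_i = max { W_i, W_i^{(1-i)/i} }` (real powers). -/
def Mseq (w : ℕ → ℝ) (i : ℕ) : ℝ :=
  max (Wseq w i) (Wseq w i ^ ((1 - (i : ℝ)) / (i : ℝ)))

/-- `G = 2 m max{W_m, 1} e^{W_m} ∏_{i=1}^{m-1} M_i²`. -/
def Gconst (w : ℕ → ℝ) (m : ℕ) : ℝ :=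
  2 * m * max (Wseq w m) 1 * Real.exp (Wseq w m) * ∏ i ∈ Finset.Icc 1 (m - 1), (Mseq w i) ^ 2

/-- Value of the underlying at a node with (real) time index `i`, `j` up Brownian moves and
net jump level `l`. -/
def Sval (S0 σ dt h : ℝ) (i : ℝ) (j : ℕ) (l : ℤ) : ℝ :=
  S0 * Real.exp ((2 * (j : ℝ) - i) * (σ * Real.sqrt dt) + (l : ℝ) * h)

/-- Full backward European put price; `VEfull … d j l` is the value `V_E(n-d, j, l)`
(`d` = number of remaining steps). -/
def VEfull (n m : ℕ) (q : ℤ → ℝ) (p dt S0 K σ h r : ℝ) : ℕ → ℕ → ℤ → ℝ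
  | 0, j, l => max (K - Sval S0 σ dt h (n : ℝ) j l) 0
  | (d + 1), j, l =>
      Real.exp (-(r * dt)) *
        ∑ k ∈ Finset.Icc (-(m : ℤ)) (m : ℤ),
          (VEfull n m q p dt S0 K σ h r d (j + 1) (l + k) * p +
            VEfull n m q p dt S0 K σ h r d j (l + k) * (1 - p)) * q k

/-- Full backward American put price; `VAfull … d j l` is the value `V_A(n-d, j, l)`. -/
def VAfull (n m : ℕ) (q : ℤ → ℝ) (p dt S0 K σ h r : ℝ) : ℕ → ℕ → ℤ → ℝ
  | 0, j, l => max (K - Sval S0 σ dt h (n : ℝ) j l) 0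
  | (d + 1), j, l =>
      max
        (Real.exp (-(r * dt)) *
          ∑ k ∈ Finset.Icc (-(m : ℤ)) (m : ℤ),
            (VAfull n m q p dt S0 K σ h r d (j + 1) (l + k) * p +
              VAfull n m q p dt S0 K σ h r d j (l + k) * (1 - p)) * q k)
        (K - Sval S0 σ dt h ((n : ℝ) - (d + 1)) j l)

/-- Truncated backward European put price with boundary value `b`;
`VEtr … d j l` is the value `V_E^b(n-d, j, l)`. -/
def VEtr (n m : ℕ) (q : ℤ → ℝ) (p dt S0 K σ h r b : ℝ) (kbar lbar : ℕ) :
    ℕ → ℕ → ℤ → ℝ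
  | 0, j, l =>
      if -(lbar : ℤ) ≤ l ∧ l ≤ (kbar : ℤ) then max (K - Sval S0 σ dt h (n : ℝ) j l) 0 else b
  | (d + 1), j, l =>
      if -(lbar : ℤ) ≤ l ∧ l ≤ (kbar : ℤ) then
        Real.exp (-(r * dt)) *
          ∑ k ∈ Finset.Icc (-(m : ℤ)) (m : ℤ),
            (VEtr n m q p dt S0 K σ h r b kbar lbar d (j + 1) (l + k) * p +
              VEtr n m q p dt S0 K σ h r b kbar lbar d j (l + k) * (1 - p)) * q k
      else b

/-- Truncated backward American put price with boundary value `b`;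
`VAtr … d j l` is the value `V_A^b(n-d, j, l)`. -/
def VAtr (n m : ℕ) (q : ℤ → ℝ) (p dt S0 K σ h r b : ℝ) (kbar lbar : ℕ) :
    ℕ → ℕ → ℤ → ℝ
  | 0, j, l =>
      if -(lbar : ℤ) ≤ l ∧ l ≤ (kbar : ℤ) then max (K - Sval S0 σ dt h (n : ℝ) j l) 0 else b
  | (d + 1), j, l =>
      if -(lbar : ℤ) ≤ l ∧ l ≤ (kbar : ℤ) then
        max
          (Real.exp (-(r * dt)) *
            ∑ k ∈ Finset.Icc (-(m : ℤ)) (m : ℤ),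
              (VAtr n m q p dt S0 K σ h r b kbar lbar d (j + 1) (l + k) * p +
                VAtr n m q p dt S0 K σ h r b kbar lbar d j (l + k) * (1 - p)) * q k)
          (K - Sval S0 σ dt h ((n : ℝ) - (d + 1)) j l)
      else b

/-- The sum, over all jump-path prefixes that first exit the band `[-l̄, k̄]` at some time
`1 ≤ i ≤ n`, of the prefix probability times `b e^{-r i Δt}`. -/
def exitSum (n m : ℕ) (q : ℤ → ℝ) (r dt : ℝ) (kbar lbar : ℕ) (b : ℝ) : ℝ :=
  ∑ i ∈ Finset.Icc 1 n,
    ∑ y ∈ (paths i m).filter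
        (fun y =>
          (∀ t < i, -(lbar : ℤ) ≤ levelAt i y t ∧ levelAt i y t ≤ (kbar : ℤ)) ∧
          ¬(-(lbar : ℤ) ≤ levelAt i y i ∧ levelAt i y i ≤ (kbar : ℤ))),
      pathWeight i q y * (b * Real.exp (-(r * (i : ℝ) * dt)))

-- Aux lemmas

lemma mem_paths_one {n : ℕ} {s : Fin n → ℤ} (hs : s ∈ paths n 1) (i : Fin n) :
    -1 ≤ s i ∧ s i ≤ 1 := by
  have := (Fintype.mem_piFinset.mp hs) i
  simpa [Finset.mem_Icc] using this

lemma pathWeight_nonneg {n : ℕ} {q : ℤ → ℝ}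
    (hq : ∀ x : ℤ, -1 ≤ x → x ≤ 1 → 0 ≤ q x) {s : Fin n → ℤ} (hs : s ∈ paths n 1) :
    0 ≤ pathWeight n q s := by
  refine Finset.prod_nonneg fun i _ => ?_
  exact hq _ (mem_paths_one hs i).1 (mem_paths_one hs i).2

lemma level_le_card {n : ℕ} {s : Fin n → ℤ} (hs : ∀ i, s i ≤ 1) (t : ℕ) :
    levelAt n s t ≤ ((Finset.univ.filter (fun i => s i = 1)).card : ℤ) := by
  classical
  calc levelAt n s t ≤ ∑ i ∈ Finset.univ.filter (fun i : Fin n => (i : ℕ) < t),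
        (if s i = 1 then (1 : ℤ) else 0) := by
        refine Finset.sum_le_sum fun i _ => ?_
        have := hs i
        split_ifs with h <;> omega
    _ = (((Finset.univ.filter (fun i : Fin n => (i : ℕ) < t)).filter
          (fun i => s i = 1)).card : ℤ) := by
        simp [Finset.sum_boole]
    _ ≤ _ := by
        have hsub : ((Finset.univ.filter (fun i : Fin n => (i : ℕ) < t)).filter
            (fun i => s i = 1)) ⊆ Finset.univ.filter (fun i => s i = 1) := by
          intro i hi
          simp only [Finset.mem_filter] at *
          exact ⟨Finset.mem_univ _, hi.2⟩
        exact_mod_cast Nat.cast_le.mpr (Finset.card_le_card hsub)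

lemma neg_card_le_level {n : ℕ} {s : Fin n → ℤ} (hs : ∀ i, -1 ≤ s i) (t : ℕ) :
    -((Finset.univ.filter (fun i => s i = -1)).card : ℤ) ≤ levelAt n s t := by
  classical
  have h1 : ∑ i ∈ Finset.univ.filter (fun i : Fin n => (i : ℕ) < t),
      (if s i = -1 then (-1 : ℤ) else 0) ≤ levelAt n s t := by
    refine Finset.sum_le_sum fun i _ => ?_
    have := hs i
    split_ifs with h <;> omega
  have h2 : ∑ i ∈ Finset.univ.filter (fun i : Fin n => (i : ℕ) < t),
      (if s i = -1 then (-1 : ℤ) else 0)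
      = -(((Finset.univ.filter (fun i : Fin n => (i : ℕ) < t)).filter
          (fun i => s i = -1)).card : ℤ) := by
    have : ∀ i : Fin n, (if s i = -1 then (-1 : ℤ) else 0)
        = -(if s i = -1 then (1:ℤ) else 0) := by intro i; split_ifs <;> simp
    simp only [this, Finset.sum_neg_distrib]
    simp [Finset.sum_boole]
  have hsub : ((Finset.univ.filter (fun i : Fin n => (i : ℕ) < t)).filter
      (fun i => s i = -1)) ⊆ Finset.univ.filter (fun i => s i = -1) := by
    intro i hi
    simp only [Finset.mem_filter] at *
    exact ⟨Finset.mem_univ _, hi.2⟩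
  have := Nat.cast_le (α := ℤ) |>.mpr (Finset.card_le_card hsub)
  omega

lemma sum_Icc_one (q : ℤ → ℝ) : ∑ x ∈ Finset.Icc (-1 : ℤ) 1, q x = q (-1) + q 0 + q 1 := by
  have : Finset.Icc (-1 : ℤ) 1 = {-1, 0, 1} := by decide
  rw [this]
  norm_num
  ring

lemma sum_filter_forall_eq_pow (n : ℕ) (q : ℤ → ℝ)
    (hsum : q (-1) + q 0 + q 1 = 1) (v : ℤ) (hv : v ∈ Finset.Icc (-1 : ℤ) 1)
    (A : Finset (Fin n)) :
    ∑ s ∈ (paths n 1).filter (fun s => ∀ i ∈ A, s i = v), pathWeight n q s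
      = q v ^ A.card := by
  classical
  have hfe : (paths n 1).filter (fun s => ∀ i ∈ A, s i = v)
      = Fintype.piFinset (fun i : Fin n =>
          if i ∈ A then ({v} : Finset ℤ) else Finset.Icc (-1 : ℤ) 1) := by
    ext s
    simp only [Finset.mem_filter, paths, Fintype.mem_piFinset, Nat.cast_one]
    constructor
    · rintro ⟨h1, h2⟩ i
      by_cases hiA : i ∈ A
      · simp [hiA, h2 i hiA]
      · simpa [hiA] using h1 i
    · intro hmem
      constructor
      · intro i
        by_cases hiA : i ∈ A
        · have := hmem i; rw [if_pos hiA] at this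
          simp only [Finset.mem_singleton] at this
          rw [this]; exact hv
        · have := hmem i; rwa [if_neg hiA] at this
      · intro i hiA
        have := hmem i; rw [if_pos hiA] at this
        simpa using this
  rw [hfe]
  have := (Finset.prod_univ_sum (fun i : Fin n =>
      if i ∈ A then ({v} : Finset ℤ) else Finset.Icc (-1 : ℤ) 1) (fun _ x => q x)).symm
  rw [show (∑ s ∈ Fintype.piFinset (fun i : Fin n =>
      if i ∈ A then ({v} : Finset ℤ) else Finset.Icc (-1 : ℤ) 1), pathWeight n q s)
    = ∑ x ∈ Fintype.piFinset (fun i : Fin n =>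
      if i ∈ A then ({v} : Finset ℤ) else Finset.Icc (-1 : ℤ) 1), ∏ i, q (x i) from rfl, this]
  have hfac : ∀ i : Fin n, (∑ x ∈ (if i ∈ A then ({v} : Finset ℤ) else Finset.Icc (-1 : ℤ) 1),
      q x) = if i ∈ A then q v else 1 := by
    intro i
    split_ifs with hiA
    · simp
    · rw [sum_Icc_one, hsum]
  rw [Finset.prod_congr rfl (fun i _ => hfac i), Finset.prod_ite_mem, Finset.univ_inter,
    Finset.prod_const]

lemma sum_filter_card_ge (n a : ℕ) (q : ℤ → ℝ)
    (hq : ∀ x : ℤ, -1 ≤ x → x ≤ 1 → 0 ≤ q x)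
    (hsum : q (-1) + q 0 + q 1 = 1) (v : ℤ) (hv : v ∈ Finset.Icc (-1 : ℤ) 1) :
    ∑ s ∈ (paths n 1).filter
        (fun s => a ≤ (Finset.univ.filter (fun i => s i = v)).card),
      pathWeight n q s ≤ (n.choose a : ℝ) * q v ^ a := by
  classical
  set F := (paths n 1).filter
      (fun s => a ≤ (Finset.univ.filter (fun i => s i = v)).card) with hF
  have hFsub : F ⊆ paths n 1 := Finset.filter_subset _ _
  have hqv : 0 ≤ q v := by
    have := Finset.mem_Icc.mp hv; exact hq v this.1 this.2
  have step1 : ∑ s ∈ F, pathWeight n q s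
      ≤ ∑ s ∈ F, ∑ A ∈ Finset.powersetCard a (Finset.univ : Finset (Fin n)),
          (if ∀ i ∈ A, s i = v then pathWeight n q s else 0) := by
    refine Finset.sum_le_sum fun s hsF => ?_
    have hsath : a ≤ (Finset.univ.filter (fun i => s i = v)).card :=
      (Finset.mem_filter.mp hsF).2
    obtain ⟨A0, hA0sub, hA0card⟩ :=
      Finset.exists_subset_card_eq (s := Finset.univ.filter (fun i => s i = v)) hsath
    have hA0mem : A0 ∈ Finset.powersetCard a (Finset.univ : Finset (Fin n)) := by
      rw [Finset.mem_powersetCard]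
      exact ⟨Finset.subset_univ _, hA0card⟩
    have hA0all : ∀ i ∈ A0, s i = v := fun i hi =>
      (Finset.mem_filter.mp (hA0sub hi)).2
    have hnn : 0 ≤ pathWeight n q s := pathWeight_nonneg hq (hFsub hsF)
    calc pathWeight n q s = (if ∀ i ∈ A0, s i = v then pathWeight n q s else 0) := by
          rw [if_pos hA0all]
      _ ≤ _ := by
          refine Finset.single_le_sum (f := fun A => if ∀ i ∈ A, s i = v then pathWeight n q s else 0)
            (fun A _ => ?_) hA0mem
          split_ifs <;> simp [hnn]
  have step2 : ∑ s ∈ F, ∑ A ∈ Finset.powersetCard a (Finset.univ : Finset (Fin n)),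
      (if ∀ i ∈ A, s i = v then pathWeight n q s else 0)
      = ∑ A ∈ Finset.powersetCard a (Finset.univ : Finset (Fin n)),
          ∑ s ∈ F.filter (fun s => ∀ i ∈ A, s i = v), pathWeight n q s := by
    rw [Finset.sum_comm]
    exact Finset.sum_congr rfl fun A _ => (Finset.sum_filter _ _).symm
  have step3 : ∀ A ∈ Finset.powersetCard a (Finset.univ : Finset (Fin n)),
      ∑ s ∈ F.filter (fun s => ∀ i ∈ A, s i = v), pathWeight n q s ≤ q v ^ a := by
    intro A hA
    have hcard : A.card = a := (Finset.mem_powersetCard.mp hA).2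
    have hsub : F.filter (fun s => ∀ i ∈ A, s i = v)
        ⊆ (paths n 1).filter (fun s => ∀ i ∈ A, s i = v) :=
      Finset.filter_subset_filter _ hFsub
    calc ∑ s ∈ F.filter (fun s => ∀ i ∈ A, s i = v), pathWeight n q s
        ≤ ∑ s ∈ (paths n 1).filter (fun s => ∀ i ∈ A, s i = v), pathWeight n q s := by
          refine Finset.sum_le_sum_of_subset_of_nonneg hsub fun s hs _ => ?_
          exact pathWeight_nonneg hq (Finset.filter_subset _ _ hs)
      _ = q v ^ A.card := sum_filter_forall_eq_pow n q hsum v hv A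
      _ = q v ^ a := by rw [hcard]
  calc ∑ s ∈ F, pathWeight n q s ≤ _ := step1
    _ = _ := step2
    _ ≤ ∑ _A ∈ Finset.powersetCard a (Finset.univ : Finset (Fin n)), q v ^ a :=
        Finset.sum_le_sum step3
    _ = (n.choose a : ℝ) * q v ^ a := by
        rw [Finset.sum_const, Finset.card_powersetCard, Finset.card_univ, Fintype.card_fin,
          nsmul_eq_mul]

lemma level_bounds {n : ℕ} {s : Fin n → ℤ} (hs : s ∈ paths n 1) (t : ℕ) :
    -(n : ℤ) ≤ levelAt n s t ∧ levelAt n s t ≤ (n : ℤ) := by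
  classical
  have h1 : ∀ i, s i ≤ 1 := fun i => (mem_paths_one hs i).2
  have h2 : ∀ i, -1 ≤ s i := fun i => (mem_paths_one hs i).1
  have hu := level_le_card h1 t
  have hl := neg_card_le_level h2 t
  have c1 : (Finset.univ.filter (fun i => s i = 1)).card ≤ n := by
    simpa using Finset.card_filter_le (Finset.univ : Finset (Fin n)) _
  have c2 : (Finset.univ.filter (fun i => s i = -1)).card ≤ n := by
    simpa using Finset.card_filter_le (Finset.univ : Finset (Fin n)) _
  omega

lemma binomP_sum (n : ℕ) (p : ℝ) : ∑ j ∈ Finset.range (n + 1), binomP n p j = 1 := by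
  have := add_pow p (1 - p) n
  have h1 : p + (1 - p) = 1 := by ring
  rw [h1, one_pow] at this
  rw [this]
  refine Finset.sum_congr rfl fun j _ => ?_
  unfold binomP
  ring

lemma binomP_nonneg {n : ℕ} {p : ℝ} (hp0 : 0 ≤ p) (hp1 : p ≤ 1) (j : ℕ) :
    0 ≤ binomP n p j := by
  unfold binomP
  have : (0:ℝ) ≤ 1 - p := by linarith
  positivity

lemma putPayoff_le {n : ℕ} {S0 K σ dt h : ℝ} (hS0 : 0 < S0) (hK : 0 < K) (j : ℕ) (k : ℤ) :
    putPayoff n S0 K σ dt h j k ≤ K := by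
  unfold putPayoff
  have : 0 < S0 * Real.exp ((2 * (j : ℝ) - (n : ℝ)) * (σ * Real.sqrt dt) + h * (k : ℝ)) :=
    mul_pos hS0 (Real.exp_pos _)
  refine max_le (by linarith) (le_of_lt hK)

lemma putPayoff_nonneg (n : ℕ) (S0 K σ dt h : ℝ) (j : ℕ) (k : ℤ) :
    0 ≤ putPayoff n S0 K σ dt h j k := le_max_right _ _

lemma choose_pow_le (n a : ℕ) (hn : 0 < n) (x w : ℝ) (hx0 : 0 ≤ x) (hxw : x ≤ w / n)
    (hw0 : 0 ≤ w) :
    (n.choose a : ℝ) * x ^ a ≤ Real.exp (w * Real.exp 1) * Real.exp (-(a : ℝ)) := by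
  have hn' : (0:ℝ) < n := by exact_mod_cast hn
  have h1 : (n.choose a : ℝ) * x ^ a ≤ ((n : ℝ) ^ a / (a.factorial : ℝ)) * (w / n) ^ a := by
    refine mul_le_mul (Nat.choose_le_pow_div a n) (pow_le_pow_left₀ hx0 hxw a)
      (by positivity) (by positivity)
  have h2 : ((n : ℝ) ^ a / (a.factorial : ℝ)) * (w / n) ^ a = w ^ a / (a.factorial : ℝ) := by
    have hfac : (a.factorial : ℝ) ≠ 0 := by positivity
    rw [div_pow]
    field_simp
  have hx' : 0 ≤ w * Real.exp 1 := mul_nonneg hw0 (Real.exp_pos 1).le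
  have hterm : (w * Real.exp 1) ^ a / (a.factorial : ℝ) ≤ Real.exp (w * Real.exp 1) := by
    calc (w * Real.exp 1) ^ a / (a.factorial : ℝ)
        ≤ ∑ i ∈ Finset.range (a + 1), (w * Real.exp 1) ^ i / (i.factorial : ℝ) := by
          refine Finset.single_le_sum (f := fun i => (w * Real.exp 1) ^ i / (i.factorial : ℝ))
            (fun i _ => by positivity) (Finset.self_mem_range_succ a)
      _ ≤ _ := Real.sum_le_exp_of_nonneg hx' (a + 1)
  have hexp : Real.exp 1 ^ a = Real.exp (a : ℝ) := by
    rw [← Real.exp_nat_mul]; norm_num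
  have key : w ^ a / (a.factorial : ℝ) = ((w * Real.exp 1) ^ a / (a.factorial : ℝ)) * Real.exp (-(a : ℝ)) := by
    rw [mul_pow, hexp, Real.exp_neg]
    have h3 : Real.exp (a : ℝ) ≠ 0 := Real.exp_ne_zero _
    field_simp
  calc (n.choose a : ℝ) * x ^ a ≤ ((n : ℝ) ^ a / (a.factorial : ℝ)) * (w / n) ^ a := h1
    _ = w ^ a / (a.factorial : ℝ) := h2
    _ = ((w * Real.exp 1) ^ a / (a.factorial : ℝ)) * Real.exp (-(a : ℝ)) := key
    _ ≤ Real.exp (w * Real.exp 1) * Real.exp (-(a : ℝ)) :=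
        mul_le_mul_of_nonneg_right hterm (Real.exp_pos _).le

end HScut

open HScut

set_option maxHeartbeats 2000000 in
/-- Theorem (European put, m = 1): if `k̄ = l̄ ≥ max{−ln ε + c, 2w − 2}` with
`c = w(e+1) − rτ − 1 + ln(4K) + ln(2+w)`, then `V − V^{TT} < ε`. -/
theorem put_truncation_error_one (n : ℕ) (hn : 1 ≤ n) (q : ℤ → ℝ)
    (hqm : 0 ≤ q (-1)) (hq0 : 0 ≤ q 0) (hqp : 0 ≤ q 1)
    (hsum : q (-1) + q 0 + q 1 = 1)
    (w : ℝ) (hw : w = (n : ℝ) * max (q 1) (q (-1)))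
    (S0 K σ τ h r p : ℝ) (hS0 : 0 < S0) (hK : 0 < K) (hh : 0 < h) (hτ : 0 < τ)
    (hp0 : 0 ≤ p) (hp1 : p ≤ 1)
    (ε : ℝ) (hε : 0 < ε) (kbar : ℕ)
    (hkbar : max
        (-Real.log ε + (w * (Real.exp 1 + 1) - r * τ - 1 + Real.log (4 * K) + Real.log (2 + w)))
        (2 * w - 2) ≤ (kbar : ℝ)) :
    Vput n 1 q p S0 K σ τ h r - VTT n 1 q p S0 K σ τ h r kbar kbar < ε := by
  classical
  have hn0 : (0:ℝ) < n := by exact_mod_cast hn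
  have hq : ∀ x : ℤ, -1 ≤ x → x ≤ 1 → 0 ≤ q x := by
    intro x h1 h2; interval_cases x <;> assumption
  have hw0 : 0 ≤ w := by
    rw [hw]
    exact mul_nonneg hn0.le (le_trans hqp (le_max_left _ _))
  set F : ℤ → ℝ := fun k =>
    ∑ j ∈ Finset.range (n + 1), putPayoff n S0 K σ (τ / n) h j k * binomP n p j with hFdef
  have hF0 : ∀ k : ℤ, 0 ≤ F k := fun k =>
    Finset.sum_nonneg fun j _ =>
      mul_nonneg (putPayoff_nonneg _ _ _ _ _ _ _ _) (binomP_nonneg hp0 hp1 j)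
  have hFK : ∀ k : ℤ, F k ≤ K := by
    intro k
    calc F k ≤ ∑ j ∈ Finset.range (n + 1), K * binomP n p j :=
        Finset.sum_le_sum fun j _ =>
          mul_le_mul_of_nonneg_right (putPayoff_le hS0 hK j k) (binomP_nonneg hp0 hp1 j)
      _ = K := by rw [← Finset.mul_sum, binomP_sum, mul_one]
  -- rewrite V as a sum over all paths
  have hV : Vput n 1 q p S0 K σ τ h r
      = Real.exp (-(r * τ)) * ∑ s ∈ paths n 1, pathWeight n q s * F (levelAt n s n) := by
    unfold Vput
    congr 1
    simp only [Nat.cast_one, one_mul]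
    have step1 : ∀ k : ℤ, ∑ j ∈ Finset.range (n + 1),
        putPayoff n S0 K σ (τ / n) h j k * binomP n p j * qfull n 1 q k
        = ∑ s ∈ (paths n 1).filter (fun s => levelAt n s n = k),
            pathWeight n q s * F (levelAt n s n) := by
      intro k
      rw [← Finset.sum_mul]
      show F k * qfull n 1 q k = _
      unfold qfull
      rw [Finset.mul_sum]
      refine Finset.sum_congr rfl fun s hs => ?_
      rw [(Finset.mem_filter.mp hs).2, mul_comm]
    rw [Finset.sum_congr rfl (fun k _ => step1 k)]
    exact Finset.sum_fiberwise_of_maps_to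
      (fun s hs => Finset.mem_Icc.mpr (level_bounds hs n)) _
  -- rewrite VTT as a sum over band paths
  have hVTT : VTT n 1 q p S0 K σ τ h r kbar kbar
      = Real.exp (-(r * τ)) *
          ∑ s ∈ (paths n 1).filter (fun s => ∀ t ≤ n,
              -(kbar : ℤ) ≤ levelAt n s t ∧ levelAt n s t ≤ (kbar : ℤ)),
            pathWeight n q s * F (levelAt n s n) := by
    unfold VTT
    congr 1
    have hqcut : ∀ k : ℤ, qcut n 1 q kbar kbar k
        = ∑ s ∈ ((paths n 1).filter (fun s => ∀ t ≤ n,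
              -(kbar : ℤ) ≤ levelAt n s t ∧ levelAt n s t ≤ (kbar : ℤ))).filter
            (fun s => levelAt n s n = k),
            pathWeight n q s := by
      intro k
      unfold qcut
      rw [Finset.filter_filter]
      refine Finset.sum_congr ?_ fun _ _ => rfl
      ext s
      simp only [Finset.mem_filter]
      tauto
    have step1 : ∀ k : ℤ, ∑ j ∈ Finset.range (n + 1),
        putPayoff n S0 K σ (τ / n) h j k * binomP n p j * qcut n 1 q kbar kbar k
        = ∑ s ∈ ((paths n 1).filter (fun s => ∀ t ≤ n,
              -(kbar : ℤ) ≤ levelAt n s t ∧ levelAt n s t ≤ (kbar : ℤ))).filter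
            (fun s => levelAt n s n = k),
            pathWeight n q s * F (levelAt n s n) := by
      intro k
      rw [← Finset.sum_mul]
      show F k * qcut n 1 q kbar kbar k = _
      rw [hqcut k, Finset.mul_sum]
      refine Finset.sum_congr rfl fun s hs => ?_
      rw [(Finset.mem_filter.mp hs).2, mul_comm]
    rw [Finset.sum_congr rfl (fun k _ => step1 k)]
    refine Finset.sum_fiberwise_of_maps_to (fun s hs => ?_) _
    have hband := (Finset.mem_filter.mp hs).2
    exact Finset.mem_Icc.mpr (hband n le_rfl)
  -- the difference is the sum over exiting paths
  have hsplit := Finset.sum_filter_add_sum_filter_not (paths n 1)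
    (fun s => ∀ t ≤ n, -(kbar : ℤ) ≤ levelAt n s t ∧ levelAt n s t ≤ (kbar : ℤ))
    (fun s => pathWeight n q s * F (levelAt n s n))
  set Bc := (paths n 1).filter (fun s => ¬ ∀ t ≤ n,
      -(kbar : ℤ) ≤ levelAt n s t ∧ levelAt n s t ≤ (kbar : ℤ)) with hBcdef
  have hdiff : Vput n 1 q p S0 K σ τ h r - VTT n 1 q p S0 K σ τ h r kbar kbar
      = Real.exp (-(r * τ)) * ∑ s ∈ Bc, pathWeight n q s * F (levelAt n s n) := by
    rw [hV, hVTT, ← mul_sub]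
    congr 1
    rw [← hsplit]
    ring
  -- bound the payoff factor by K
  have hBcK : ∑ s ∈ Bc, pathWeight n q s * F (levelAt n s n)
      ≤ K * ∑ s ∈ Bc, pathWeight n q s := by
    rw [Finset.mul_sum]
    refine Finset.sum_le_sum fun s hs => ?_
    have hπ : 0 ≤ pathWeight n q s := pathWeight_nonneg hq (Finset.filter_subset _ _ hs)
    calc pathWeight n q s * F (levelAt n s n) ≤ pathWeight n q s * K :=
        mul_le_mul_of_nonneg_left (hFK _) hπ
      _ = K * pathWeight n q s := mul_comm _ _
  -- exiting paths have at least kbar+1 jumps in one direction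
  have hbridge : ∀ s ∈ Bc,
      kbar + 1 ≤ (Finset.univ.filter (fun i => s i = 1)).card ∨
      kbar + 1 ≤ (Finset.univ.filter (fun i => s i = -1)).card := by
    intro s hs
    obtain ⟨hsp, hnb⟩ := Finset.mem_filter.mp hs
    push_neg at hnb
    obtain ⟨t, ht, hviol⟩ := hnb
    have h1 := level_le_card (fun i => (mem_paths_one hsp i).2) t
    have h2 := neg_card_le_level (fun i => (mem_paths_one hsp i).1) t
    by_cases hA : -(kbar : ℤ) ≤ levelAt n s t
    · have hB := hviol hA
      left; omega
    · right; omega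
  -- sum over exiting paths is small
  have hU1 := sum_filter_card_ge n (kbar + 1) q hq hsum 1 (by decide)
  have hU2 := sum_filter_card_ge n (kbar + 1) q hq hsum (-1) (by decide)
  have hBcsum : ∑ s ∈ Bc, pathWeight n q s
      ≤ (n.choose (kbar + 1) : ℝ) * q 1 ^ (kbar + 1)
        + (n.choose (kbar + 1) : ℝ) * q (-1) ^ (kbar + 1) := by
    set U1 := (paths n 1).filter
      (fun s => kbar + 1 ≤ (Finset.univ.filter (fun i => s i = 1)).card) with hU1def
    set U2 := (paths n 1).filter
      (fun s => kbar + 1 ≤ (Finset.univ.filter (fun i => s i = -1)).card) with hU2def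
    have hsub : Bc ⊆ U1 ∪ U2 := by
      intro s hs
      rcases hbridge s hs with hcase | hcase
      · exact Finset.mem_union_left _
          (Finset.mem_filter.mpr ⟨(Finset.mem_filter.mp hs).1, hcase⟩)
      · exact Finset.mem_union_right _
          (Finset.mem_filter.mpr ⟨(Finset.mem_filter.mp hs).1, hcase⟩)
    have hmemp : ∀ s ∈ U1 ∪ U2, 0 ≤ pathWeight n q s := by
      intro s hs
      rcases Finset.mem_union.mp hs with hs | hs
      · exact pathWeight_nonneg hq (Finset.filter_subset _ _ hs)
      · exact pathWeight_nonneg hq (Finset.filter_subset _ _ hs)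
    have hinter : 0 ≤ ∑ s ∈ U1 ∩ U2, pathWeight n q s :=
      Finset.sum_nonneg fun s hs =>
        hmemp s (Finset.mem_union_left _ (Finset.mem_inter.mp hs).1)
    have hui := Finset.sum_union_inter (s₁ := U1) (s₂ := U2) (f := fun s => pathWeight n q s)
    calc ∑ s ∈ Bc, pathWeight n q s ≤ ∑ s ∈ U1 ∪ U2, pathWeight n q s :=
        Finset.sum_le_sum_of_subset_of_nonneg hsub fun s hs _ => hmemp s hs
      _ ≤ ∑ s ∈ U1, pathWeight n q s + ∑ s ∈ U2, pathWeight n q s := by linarith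
      _ ≤ _ := add_le_add hU1 hU2
  -- numeric bound for each direction
  have hq1w : q 1 ≤ w / n := by
    rw [hw, mul_comm, mul_div_assoc, div_self hn0.ne', mul_one]
    exact le_max_left _ _
  have hqmw : q (-1) ≤ w / n := by
    rw [hw, mul_comm, mul_div_assoc, div_self hn0.ne', mul_one]
    exact le_max_right _ _
  have hcb1 := choose_pow_le n (kbar + 1) hn (q 1) w hqp hq1w hw0
  have hcb2 := choose_pow_le n (kbar + 1) hn (q (-1)) w hqm hqmw hw0
  have hcast : (((kbar + 1 : ℕ)) : ℝ) = (kbar : ℝ) + 1 := by push_cast; ring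
  rw [hcast] at hcb1 hcb2
  -- assemble
  have hEpos := Real.exp_pos (w * Real.exp 1)
  have hErτ := Real.exp_pos (-(r * τ))
  have htotal : Vput n 1 q p S0 K σ τ h r - VTT n 1 q p S0 K σ τ h r kbar kbar
      ≤ Real.exp (-(r * τ)) *
          (K * (2 * (Real.exp (w * Real.exp 1) * Real.exp (-((kbar : ℝ) + 1))))) := by
    rw [hdiff]
    refine mul_le_mul_of_nonneg_left ?_ hErτ.le
    calc ∑ s ∈ Bc, pathWeight n q s * F (levelAt n s n)
        ≤ K * ∑ s ∈ Bc, pathWeight n q s := hBcK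
      _ ≤ K * ((n.choose (kbar + 1) : ℝ) * q 1 ^ (kbar + 1)
            + (n.choose (kbar + 1) : ℝ) * q (-1) ^ (kbar + 1)) :=
          mul_le_mul_of_nonneg_left hBcsum hK.le
      _ ≤ K * (2 * (Real.exp (w * Real.exp 1) * Real.exp (-((kbar : ℝ) + 1)))) := by
          refine mul_le_mul_of_nonneg_left ?_ hK.le
          nlinarith [hcb1, hcb2]
  -- final strict numeric inequality
  have h2w : (0:ℝ) < 2 + w := by linarith
  have h4K : (0:ℝ) < 4 * K := by linarith
  have hc : -Real.log ε + (w * (Real.exp 1 + 1) - r * τ - 1 + Real.log (4 * K)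
      + Real.log (2 + w)) ≤ (kbar : ℝ) := le_trans (le_max_left _ _) hkbar
  have hεge : Real.exp ((w * (Real.exp 1 + 1) - r * τ - 1 + Real.log (4 * K)
      + Real.log (2 + w)) - kbar) ≤ ε := by
    rw [← Real.exp_log hε]
    exact Real.exp_le_exp.mpr (by linarith)
  have hexpand : Real.exp ((w * (Real.exp 1 + 1) - r * τ - 1 + Real.log (4 * K)
        + Real.log (2 + w)) - kbar)
      = 4 * K * ((2 + w) * Real.exp (w * Real.exp 1 + w - r * τ - 1 - kbar)) := by
    rw [show (w * (Real.exp 1 + 1) - r * τ - 1 + Real.log (4 * K) + Real.log (2 + w))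
        - (kbar : ℝ)
        = Real.log (4 * K) + (Real.log (2 + w) + (w * Real.exp 1 + w - r * τ - 1 - kbar))
        by ring]
    rw [Real.exp_add, Real.exp_add, Real.exp_log h4K, Real.exp_log h2w]
  have hLHS : Real.exp (-(r * τ)) *
      (K * (2 * (Real.exp (w * Real.exp 1) * Real.exp (-((kbar : ℝ) + 1)))))
      = 2 * K * Real.exp (w * Real.exp 1 - r * τ - kbar - 1) := by
    rw [show w * Real.exp 1 - r * τ - (kbar : ℝ) - 1
        = -(r * τ) + (w * Real.exp 1 + -((kbar : ℝ) + 1)) by ring]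
    rw [Real.exp_add, Real.exp_add]
    ring
  have hY : Real.exp (w * Real.exp 1 + w - r * τ - 1 - kbar)
      = Real.exp (w * Real.exp 1 - r * τ - kbar - 1) * Real.exp w := by
    rw [← Real.exp_add]; ring_nf
  have hXpos := Real.exp_pos (w * Real.exp 1 - r * τ - (kbar : ℝ) - 1)
  have hew : 1 ≤ Real.exp w := Real.one_le_exp hw0
  have hstrict : 2 * K * Real.exp (w * Real.exp 1 - r * τ - kbar - 1)
      < 4 * K * ((2 + w) * Real.exp (w * Real.exp 1 + w - r * τ - 1 - kbar)) := by
    rw [hY]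
    set X := Real.exp (w * Real.exp 1 - r * τ - (kbar : ℝ) - 1) with hXdef
    have h1 : X * 1 ≤ X * Real.exp w := mul_le_mul_of_nonneg_left hew hXpos.le
    have h2 : (2:ℝ) * X ≤ (2 + w) * (X * Real.exp w) := by nlinarith
    have hpos : 0 < (2 + w) * (X * Real.exp w) := by positivity
    calc 2 * K * X = K * (2 * X) := by ring
      _ ≤ K * ((2 + w) * (X * Real.exp w)) := mul_le_mul_of_nonneg_left h2 hK.le
      _ < 4 * K * ((2 + w) * (X * Real.exp w)) := by nlinarith [mul_pos hK hpos]
  calc Vput n 1 q p S0 K σ τ h r - VTT n 1 q p S0 K σ τ h r kbar kbar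
      ≤ Real.exp (-(r * τ)) *
          (K * (2 * (Real.exp (w * Real.exp 1) * Real.exp (-((kbar : ℝ) + 1))))) := htotal
    _ = 2 * K * Real.exp (w * Real.exp 1 - r * τ - kbar - 1) := hLHS
    _ < 4 * K * ((2 + w) * Real.exp (w * Real.exp 1 + w - r * τ - 1 - kbar)) := hstrict
    _ = Real.exp ((w * (Real.exp 1 + 1) - r * τ - 1 + Real.log (4 * K)
          + Real.log (2 + w)) - kbar) := hexpand.symm
    _ ≤ ε := hεge
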